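/- In a finite extensive-form game, a totally mixed strategy profile σ satisfies all indifference equations u_j(s_j, σ_{−j}) = u_j(t_j, σ_{−j}) (for every player j and all pure strategies s_j, t_j of j) if and only if the induced profile on every subgame satisfies the corresponding indifference equations for that subgame. -/
import Mathlib


/-- A finite extensive-form game tree: leaves carry payoff vectors, chance
nodes carry edge weights, player nodes carry the acting player's label. -/
inductive GameTree (N : ℕ) : Type
  | leaf (payoff : Fin N → ℝ)
  | chance (n : ℕ) (wt : Fin n → ℝ) (children : Fin n → GameTree N)
  | node (player : Fin N) (n : ℕ) (children : Fin n → GameTree N)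

namespace GameTree

variable {N : ℕ}

/-- A behavioral strategy profile: at each node address, a probability for
each child index. -/
abbrev Profile := List ℕ → ℕ → ℝ

/-- Chance weights are positive and sum to 1; all branching is nonempty. -/
def ValidWeights : GameTree N → Prop
  | leaf _ => True
  | chance n wt cs => 0 < n ∧ (∀ k, 0 < wt k) ∧ (∑ k, wt k) = 1 ∧ ∀ k, (cs k).ValidWeights
  | node _ n cs => 0 < n ∧ ∀ k, (cs k).ValidWeights

/-- The subtree at a given address (list of child indices), if any. -/
def nodeAt : GameTree N → List ℕ → Option (GameTree N)
  | t, [] => some t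
  | leaf _, _ :: _ => none
  | chance n _ cs, k :: r => if h : k < n then (cs ⟨k, h⟩).nodeAt r else none
  | node _ n cs, k :: r => if h : k < n then (cs ⟨k, h⟩).nodeAt r else none

/-- The player acting at a given address, if any. -/
def actor (t : GameTree N) (p : List ℕ) : Option (Fin N) :=
  match t.nodeAt p with
  | some (node i _ _) => some i
  | _ => none

/-- Probability, under profile `σ`, of the path descending from the current
subtree along the given child indices; `p` is the address of the current
subtree in the whole tree. -/
noncomputable def pathProb (σ : Profile) : GameTree N → List ℕ → List ℕ → ℝ
  | _, _, [] => 1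
  | leaf _, _, _ :: _ => 0
  | chance n wt cs, p, k :: r =>
      if h : k < n then wt ⟨k, h⟩ * pathProb σ (cs ⟨k, h⟩) (p ++ [k]) r else 0
  | node _ n cs, p, k :: r =>
      if h : k < n then σ p k * pathProb σ (cs ⟨k, h⟩) (p ++ [k]) r else 0

/-- The list of addresses of all leaves of the tree. -/
def leaves : GameTree N → List (List ℕ)
  | leaf _ => [[]]
  | chance n _ cs => (List.finRange n).flatMap fun k => ((cs k).leaves).map (k.val :: ·)
  | node _ n cs => (List.finRange n).flatMap fun k => ((cs k).leaves).map (k.val :: ·)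

/-- Payoff to player `i` at the leaf with the given address (0 if invalid). -/
noncomputable def payoffAt : GameTree N → List ℕ → Fin N → ℝ
  | leaf u, [], i => u i
  | chance n _ cs, k :: r, i => if h : k < n then (cs ⟨k, h⟩).payoffAt r i else 0
  | node _ n cs, k :: r, i => if h : k < n then (cs ⟨k, h⟩).payoffAt r i else 0
  | _, _, _ => 0

/-- Expected utility of player `i` under profile `σ`:
`u_i(σ) = Σ_λ u_i(λ) Pr[λ|σ]`. -/
noncomputable def util (σ : Profile) (t : GameTree N) (i : Fin N) : ℝ :=
  (t.leaves.map fun l => t.payoffAt l i * pathProb σ t [] l).sum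

/-- The profile induced on the subgame rooted at address `ν`. -/
def induced (σ : Profile) (ν : List ℕ) : Profile := fun p => σ (ν ++ p)

/-- The behavioral profile corresponding to a pure strategy profile. -/
def pureProfile (s : List ℕ → ℕ) : Profile := fun p k => if s p = k then 1 else 0

/-- A pure strategy profile selects an actual outgoing edge at each player node. -/
def ValidPure (t : GameTree N) (s : List ℕ → ℕ) : Prop :=
  ∀ p i m cs, t.nodeAt p = some (node i m cs) → s p < m

/-- A behavioral profile is a genuine probability assignment at each player node. -/
def ValidProfile (t : GameTree N) (σ : Profile) : Prop :=
  ∀ p i m cs, t.nodeAt p = some (node i m cs) →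
    (∀ k < m, 0 ≤ σ p k) ∧ (∑ k ∈ Finset.range m, σ p k) = 1

/-- A totally mixed behavioral profile: every edge at every player node gets
strictly positive probability. -/
def TotallyMixed (t : GameTree N) (σ : Profile) : Prop :=
  ∀ p i m cs, t.nodeAt p = some (node i m cs) →
    (∀ k < m, 0 < σ p k) ∧ (∑ k ∈ Finset.range m, σ p k) = 1

/-- The profile where player `j` deviates from `σ` to the pure strategy `s`. -/
def dev (t : GameTree N) (σ : Profile) (j : Fin N) (s : List ℕ → ℕ) : Profile :=
  fun p k => if t.actor p = some j then pureProfile s p k else σ p k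

/-- Nash equilibrium: no player can improve by a unilateral pure deviation. -/
def IsNash (t : GameTree N) (σ : Profile) : Prop :=
  ∀ j : Fin N, ∀ s : List ℕ → ℕ, ValidPure t s → util (dev t σ j s) t j ≤ util σ t j

/-- Subgame perfection: the induced profile is a Nash equilibrium of every subgame. -/
def IsSubgamePerfect (t : GameTree N) (σ : Profile) : Prop :=
  ∀ ν t', t.nodeAt ν = some t' → IsNash t' (induced σ ν)

/-- Every player is indifferent among all of their pure strategies. -/
def Indifferent (t : GameTree N) (σ : Profile) : Prop :=
  ∀ j : Fin N, ∀ s₁ s₂ : List ℕ → ℕ, ValidPure t s₁ → ValidPure t s₂ →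
    util (dev t σ j s₁) t j = util (dev t σ j s₂) t j

/-- Player `j` is indifferent among all of `j`'s pure strategies. -/
def IndifferentFor (t : GameTree N) (σ : Profile) (j : Fin N) : Prop :=
  ∀ s₁ s₂ : List ℕ → ℕ, ValidPure t s₁ → ValidPure t s₂ →
    util (dev t σ j s₁) t j = util (dev t σ j s₂) t j

end GameTree

namespace GameTree

variable {N : ℕ}

/-- Composition of `nodeAt`. -/
lemma nodeAt_append : ∀ (p : List ℕ) (t t' : GameTree N) (q : List ℕ),
    t.nodeAt p = some t' → t.nodeAt (p ++ q) = t'.nodeAt q := by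
  intro p
  induction p with
  | nil => intro t t' q h; simp [nodeAt] at h; subst h; rfl
  | cons k r ih =>
    intro t t' q h
    cases t with
    | leaf _ => simp [nodeAt] at h
    | chance n wt cs =>
      simp only [nodeAt, List.cons_append] at h ⊢
      split at h
      · next hk => rw [dif_pos hk]; exact ih _ _ _ h
      · simp at h
    | node i n cs =>
      simp only [nodeAt, List.cons_append] at h ⊢
      split at h
      · next hk => rw [dif_pos hk]; exact ih _ _ _ h
      · simp at h

lemma validWeights_nodeAt : ∀ (p : List ℕ) (t t' : GameTree N),
    t.nodeAt p = some t' → t.ValidWeights → t'.ValidWeights := by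
  intro p
  induction p with
  | nil => intro t t' h hw; simp [nodeAt] at h; subst h; exact hw
  | cons k r ih =>
    intro t t' h hw
    cases t with
    | leaf _ => simp [nodeAt] at h
    | chance n wt cs =>
      simp only [nodeAt] at h
      split at h
      · exact ih _ _ h (hw.2.2.2 _)
      · simp at h
    | node i n cs =>
      simp only [nodeAt] at h
      split at h
      · exact ih _ _ h (hw.2 _)
      · simp at h

lemma actor_append (ν : List ℕ) (t t' : GameTree N) (hν : t.nodeAt ν = some t')
    (r : List ℕ) : t.actor (ν ++ r) = t'.actor r := by
  unfold actor
  rw [nodeAt_append ν t t' r hν]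

/-- `pathProb` only depends on the strategy at addresses along the path. -/
lemma pathProb_congr : ∀ (l : List ℕ) (t : GameTree N) (p q : List ℕ)
    (σ σ' : Profile), (∀ r k, r <+: l → σ' (q ++ r) k = σ (p ++ r) k) →
    pathProb σ' t q l = pathProb σ t p l := by
  intro l
  induction l with
  | nil => intro t p q σ σ' _; simp [pathProb]
  | cons k rest ih =>
    intro t p q σ σ' h
    cases t with
    | leaf _ => simp [pathProb]
    | chance n wt cs =>
      simp only [pathProb]
      split
      · next hk =>
        congr 1
        apply ih
        intro r k' hr
        have := h (k :: r) k' (by rw [List.cons_prefix_cons]; exact ⟨rfl, hr⟩)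
        simpa [List.append_assoc] using this
      · rfl
    | node i n cs =>
      simp only [pathProb]
      split
      · next hk =>
        have h0 := h [] k List.nil_prefix
        simp only [List.append_nil] at h0
        rw [h0]
        congr 1
        apply ih
        intro r k' hr
        have := h (k :: r) k' (by rw [List.cons_prefix_cons]; exact ⟨rfl, hr⟩)
        simpa [List.append_assoc] using this
      · rfl

/-- Expected utility with an explicit base address. -/
noncomputable def utilAt (σ : Profile) (t : GameTree N) (p : List ℕ) (i : Fin N) : ℝ :=
  (t.leaves.map fun l => t.payoffAt l i * pathProb σ t p l).sum

lemma util_eq_utilAt (σ : Profile) (t : GameTree N) (i : Fin N) :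
    util σ t i = utilAt σ t [] i := rfl

lemma utilAt_congr (t : GameTree N) (p q : List ℕ) (σ σ' : Profile) (i : Fin N)
    (h : ∀ r k, σ' (q ++ r) k = σ (p ++ r) k) :
    utilAt σ' t q i = utilAt σ t p i := by
  unfold utilAt
  congr 1
  apply List.map_congr_left
  intro l _
  rw [pathProb_congr l t p q σ σ' fun r k _ => h r k]

lemma sum_flatMap' {α : Type*} (l : List α) (f : α → List ℝ) :
    (l.flatMap f).sum = (l.map fun a => (f a).sum).sum := by
  induction l with
  | nil => rfl
  | cons a l ih => simp [List.flatMap_cons, ih]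

lemma utilAt_chance (σ : Profile) (n : ℕ) (wt : Fin n → ℝ) (cs : Fin n → GameTree N)
    (p : List ℕ) (i : Fin N) :
    utilAt σ (chance n wt cs) p i
      = ∑ m : Fin n, wt m * utilAt σ (cs m) (p ++ [m.val]) i := by
  unfold utilAt
  rw [Fin.sum_univ_def]
  simp only [leaves, List.map_flatMap, sum_flatMap']
  congr 1
  apply List.map_congr_left
  intro m _
  rw [← List.sum_map_mul_left]
  simp only [List.map_map]
  congr 1
  apply List.map_congr_left
  intro l _
  simp only [Function.comp]
  simp only [payoffAt, pathProb, dif_pos m.isLt, Fin.eta]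
  ring

lemma utilAt_node (σ : Profile) (j : Fin N) (n : ℕ) (cs : Fin n → GameTree N)
    (p : List ℕ) (i : Fin N) :
    utilAt σ (node j n cs) p i
      = ∑ m : Fin n, σ p m.val * utilAt σ (cs m) (p ++ [m.val]) i := by
  unfold utilAt
  rw [Fin.sum_univ_def]
  simp only [leaves, List.map_flatMap, sum_flatMap']
  congr 1
  apply List.map_congr_left
  intro m _
  rw [← List.sum_map_mul_left]
  simp only [List.map_map]
  congr 1
  apply List.map_congr_left
  intro l _
  simp only [Function.comp]
  simp only [payoffAt, pathProb, dif_pos m.isLt, Fin.eta]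
  ring

/-- Key decomposition: if two profiles agree off the subtree at `ν`, their
utilities differ by the (common) probability of reaching `ν` times the
difference of the subgame utilities. -/
lemma key_decomp : ∀ (ν : List ℕ) (t t' : GameTree N) (p : List ℕ)
    (σ₁ σ₂ : Profile) (i : Fin N), t.nodeAt ν = some t' →
    (∀ r k, ¬ ν <+: r → σ₁ (p ++ r) k = σ₂ (p ++ r) k) →
    pathProb σ₁ t p ν = pathProb σ₂ t p ν ∧
    utilAt σ₁ t p i - utilAt σ₂ t p i =
      pathProb σ₁ t p ν * (utilAt σ₁ t' (p ++ ν) i - utilAt σ₂ t' (p ++ ν) i) := by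
  intro ν
  induction ν with
  | nil =>
    intro t t' p σ₁ σ₂ i hν _
    simp only [nodeAt] at hν
    cases hν
    simp [pathProb]
  | cons k ρ ih =>
    intro t t' p σ₁ σ₂ i hν hag
    cases t with
    | leaf _ => simp [nodeAt] at hν
    | chance n wt cs =>
      simp only [nodeAt] at hν
      split at hν
      case isFalse => simp at hν
      case isTrue hk =>
      have hag' : ∀ r k', ¬ ρ <+: r →
          σ₁ ((p ++ [k]) ++ r) k' = σ₂ ((p ++ [k]) ++ r) k' := by
        intro r k' hr
        have : ¬ (k :: ρ) <+: (k :: r) := by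
          rw [List.cons_prefix_cons]; tauto
        have := hag (k :: r) k' this
        simpa [List.append_assoc] using this
      obtain ⟨hpp, hut⟩ := ih (cs ⟨k, hk⟩) t' (p ++ [k]) σ₁ σ₂ i hν hag'
      constructor
      · simp only [pathProb, dif_pos hk, hpp]
      · rw [utilAt_chance, utilAt_chance, ← Finset.sum_sub_distrib]
        have hzero : ∀ m : Fin n, m ≠ ⟨k, hk⟩ →
            wt m * utilAt σ₁ (cs m) (p ++ [m.val]) i
              - wt m * utilAt σ₂ (cs m) (p ++ [m.val]) i = 0 := by
          intro m hm
          have : utilAt σ₁ (cs m) (p ++ [m.val]) i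
              = utilAt σ₂ (cs m) (p ++ [m.val]) i := by
            apply utilAt_congr
            intro r k'
            have hmk : m.val ≠ k := by
              intro h; exact hm (Fin.ext h)
            have : ¬ (k :: ρ) <+: (m.val :: r) := by
              rw [List.cons_prefix_cons]; tauto
            have := hag (m.val :: r) k' this
            simpa [List.append_assoc] using this
          rw [this]; ring
        rw [Finset.sum_eq_single (⟨k, hk⟩ : Fin n)
          (fun b _ hb => hzero b hb) (fun h => absurd (Finset.mem_univ _) h)]
        have hassoc : (p ++ [k]) ++ ρ = p ++ (k :: ρ) := by simp
        rw [hassoc] at hut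
        simp only [pathProb, dif_pos hk]
        rw [mul_assoc, ← hut]
        ring
    | node j n cs =>
      simp only [nodeAt] at hν
      split at hν
      case isFalse => simp at hν
      case isTrue hk =>
      have hag' : ∀ r k', ¬ ρ <+: r →
          σ₁ ((p ++ [k]) ++ r) k' = σ₂ ((p ++ [k]) ++ r) k' := by
        intro r k' hr
        have : ¬ (k :: ρ) <+: (k :: r) := by
          rw [List.cons_prefix_cons]; tauto
        have := hag (k :: r) k' this
        simpa [List.append_assoc] using this
      have hhead : ∀ k', σ₁ p k' = σ₂ p k' := by
        intro k'
        have : ¬ (k :: ρ) <+: ([] : List ℕ) := by simp [List.prefix_nil]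
        have := hag [] k' this
        simpa using this
      obtain ⟨hpp, hut⟩ := ih (cs ⟨k, hk⟩) t' (p ++ [k]) σ₁ σ₂ i hν hag'
      constructor
      · simp only [pathProb, dif_pos hk, hpp, hhead k]
      · rw [utilAt_node, utilAt_node, ← Finset.sum_sub_distrib]
        have hzero : ∀ m : Fin n, m ≠ ⟨k, hk⟩ →
            σ₁ p m.val * utilAt σ₁ (cs m) (p ++ [m.val]) i
              - σ₂ p m.val * utilAt σ₂ (cs m) (p ++ [m.val]) i = 0 := by
          intro m hm
          have hu : utilAt σ₁ (cs m) (p ++ [m.val]) i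
              = utilAt σ₂ (cs m) (p ++ [m.val]) i := by
            apply utilAt_congr
            intro r k'
            have hmk : m.val ≠ k := by
              intro h; exact hm (Fin.ext h)
            have : ¬ (k :: ρ) <+: (m.val :: r) := by
              rw [List.cons_prefix_cons]; tauto
            have := hag (m.val :: r) k' this
            simpa [List.append_assoc] using this
          rw [hu, hhead]; ring
        rw [Finset.sum_eq_single (⟨k, hk⟩ : Fin n)
          (fun b _ hb => hzero b hb) (fun h => absurd (Finset.mem_univ _) h)]
        have hassoc : (p ++ [k]) ++ ρ = p ++ (k :: ρ) := by simp
        rw [hassoc] at hut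
        simp only [pathProb, dif_pos hk]
        rw [← hhead k, mul_assoc, ← hut]
        ring

/-- Positivity of the reaching probability when the strategy is positive at
the edges along the path. -/
lemma pathProb_pos : ∀ (ν : List ℕ) (t t' : GameTree N) (p : List ℕ) (σ' : Profile),
    t.nodeAt ν = some t' → t.ValidWeights →
    (∀ r k, r ++ [k] <+: ν → ∀ i m cs, t.nodeAt r = some (node i m cs) →
      0 < σ' (p ++ r) k) →
    0 < pathProb σ' t p ν := by
  intro ν
  induction ν with
  | nil => intro t t' p σ' _ _ _; norm_num [pathProb]
  | cons k ρ ih =>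
    intro t t' p σ' hν hw hpos
    cases t with
    | leaf _ => simp [nodeAt] at hν
    | chance n wt cs =>
      simp only [nodeAt] at hν
      split at hν
      case isFalse => simp at hν
      case isTrue hk =>
      simp only [pathProb, dif_pos hk]
      have : 0 < pathProb σ' (cs ⟨k, hk⟩) (p ++ [k]) ρ := by
        apply ih _ t' _ _ hν (hw.2.2.2 _)
        intro r k' hr i m cs' hr'
        have h1 : (k :: r) ++ [k'] <+: (k :: ρ) := by
          rw [List.cons_append, List.cons_prefix_cons]; exact ⟨rfl, hr⟩
        have h2 : nodeAt (chance n wt cs) (k :: r) = some (node i m cs') := by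
          simp only [nodeAt, dif_pos hk]; exact hr'
        have := hpos (k :: r) k' h1 i m cs' h2
        simpa [List.append_assoc] using this
      exact mul_pos (hw.2.1 _) this
    | node j n cs =>
      simp only [nodeAt] at hν
      split at hν
      case isFalse => simp at hν
      case isTrue hk =>
      simp only [pathProb, dif_pos hk]
      have h0 : 0 < σ' p k := by
        have h1 : ([] : List ℕ) ++ [k] <+: (k :: ρ) := ⟨ρ, rfl⟩
        have := hpos [] k h1 j n cs rfl
        simpa using this
      have : 0 < pathProb σ' (cs ⟨k, hk⟩) (p ++ [k]) ρ := by
        apply ih _ t' _ _ hν (hw.2 _)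
        intro r k' hr i m cs' hr'
        have h1 : (k :: r) ++ [k'] <+: (k :: ρ) := by
          rw [List.cons_append, List.cons_prefix_cons]; exact ⟨rfl, hr⟩
        have h2 : nodeAt (node j n cs) (k :: r) = some (node i m cs') := by
          simp only [nodeAt, dif_pos hk]; exact hr'
        have := hpos (k :: r) k' h1 i m cs' h2
        simpa [List.append_assoc] using this
      exact mul_pos h0 this

end GameTree

open GameTree in
/-- a totally mixed profile satisfies all indifference equations iff
the induced profile on every subgame satisfies the corresponding indifference
equations for that subgame. -/
theorem indifferent_iff_subgames_indifferent {N : ℕ} (t : GameTree N)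
    (hw : t.ValidWeights) (σ : GameTree.Profile) (hm : TotallyMixed t σ) :
    Indifferent t σ ↔
      ∀ ν t', t.nodeAt ν = some t' → Indifferent t' (induced σ ν) := by
  constructor
  · intro hInd ν t' hν j s₁ s₂ hs₁ hs₂
    -- extend a pure strategy of the subgame to the whole game
    set Sx : (List ℕ → ℕ) → (List ℕ → ℕ) := fun s p =>
      if ν <+: p then s (p.drop ν.length)
      else if p <+: ν then ν.getD p.length 0 else 0 with hSx
    -- S evaluated inside the subgame
    have hSin : ∀ s q, Sx s (ν ++ q) = s q := by
      intro s q
      simp only [hSx, if_pos (List.prefix_append ν q), List.drop_left]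
    -- S agrees off the subgame
    have hSout : ∀ s s' p, ¬ ν <+: p → Sx s p = Sx s' p := by
      intro s s' p hp
      simp only [hSx, if_neg hp]
    -- the next-step index along ν
    have hSpath : ∀ p k rest, ν = p ++ (k :: rest) → Sx s₁ p = k ∧ Sx s₂ p = k := by
      intro p k rest hsplit
      have hnp : ¬ ν <+: p := by
        intro h
        have h1 := h.length_le
        have h2 : p.length + (k :: rest).length = ν.length := by
          rw [hsplit, List.length_append]
        simp at h2; omega
      have hpν : p <+: ν := ⟨k :: rest, hsplit.symm⟩
      have hget : ν.getD p.length 0 = k := by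
        rw [hsplit, List.getD_append_right _ _ _ _ (le_refl _)]
        simp
      constructor <;> simp only [hSx, if_neg hnp, if_pos hpν, hget]
    -- index validity along ν
    have hlt : ∀ p k rest i m cs, ν = p ++ (k :: rest) →
        t.nodeAt p = some (node i m cs) → k < m := by
      intro p k rest i m cs hsplit hp
      have := nodeAt_append p t _ (k :: rest) hp
      rw [← hsplit, hν] at this
      simp only [nodeAt] at this
      split at this
      · next h => exact h
      · simp at this
    -- validity of the extended pure strategies
    have hvalid : ∀ s, ValidPure t' s → ValidPure t (Sx s) := by
      intro s hs p i m cs hp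
      by_cases hpre : ν <+: p
      · obtain ⟨q, rfl⟩ := hpre
        rw [hSin]
        have := nodeAt_append ν t t' q hν
        rw [hp] at this
        exact hs q i m cs this.symm
      · by_cases hpre2 : p <+: ν
        · obtain ⟨u, hu⟩ := hpre2
          cases u with
          | nil => exact absurd (by rw [← hu]; simp) hpre
          | cons k rest =>
            have hk := hlt p k rest i m cs hu.symm hp
            have hget : ν.getD p.length 0 = k := by
              rw [← hu, List.getD_append_right _ _ _ _ (le_refl _)]
              simp
            have hp2 : p <+: ν := ⟨k :: rest, hu⟩
            simp only [hSx, if_neg hpre, if_pos hp2, hget]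
            exact hk
        · simp only [hSx, if_neg hpre, if_neg hpre2]
          have := validWeights_nodeAt p t _ hp hw
          exact this.1
    set σ₁ : GameTree.Profile := dev t σ j (Sx s₁) with hσ₁
    set σ₂ : GameTree.Profile := dev t σ j (Sx s₂) with hσ₂
    have hEq : util σ₁ t j = util σ₂ t j :=
      hInd j (Sx s₁) (Sx s₂) (hvalid s₁ hs₁) (hvalid s₂ hs₂)
    have hag : ∀ r k, ¬ ν <+: r → σ₁ ([] ++ r) k = σ₂ ([] ++ r) k := by
      intro r k hr
      simp only [List.nil_append, hσ₁, hσ₂, dev, pureProfile, hSout s₁ s₂ r hr]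
    obtain ⟨hpp, hdiff⟩ := key_decomp ν t t' [] σ₁ σ₂ j hν hag
    have hpos : 0 < pathProb σ₁ t [] ν := by
      apply pathProb_pos ν t t' [] σ₁ hν hw
      intro r k hrk i m cs hr
      obtain ⟨rest, hrest⟩ := hrk
      have hsplit : ν = r ++ (k :: rest) := by
        rw [← hrest]; simp
      have hact : t.actor r = some i := by unfold actor; rw [hr]
      simp only [List.nil_append, hσ₁, dev, hact]
      by_cases hij : i = j
      · rw [if_pos (by rw [hij])]
        simp only [pureProfile, (hSpath r k rest hsplit).1, if_pos rfl]
        norm_num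
      · rw [if_neg (by simpa using hij)]
        exact (hm r i m cs hr).1 k (hlt r k rest i m cs hsplit hr)
    have hsub : utilAt σ₁ t' ν j = utilAt σ₂ t' ν j := by
      rw [util_eq_utilAt, util_eq_utilAt] at hEq
      rw [hEq, sub_self] at hdiff
      have hD := (mul_eq_zero.mp hdiff.symm).resolve_left (ne_of_gt hpos)
      rw [List.nil_append] at hD
      exact sub_eq_zero.mp hD
    -- transfer to the induced subgame profiles
    have htrans : ∀ s (σ' : GameTree.Profile), σ' = dev t σ j (Sx s) →
        util (dev t' (induced σ ν) j s) t' j = utilAt σ' t' ν j := by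
      intro s σ' hσ'
      rw [util_eq_utilAt]
      apply utilAt_congr
      intro r k
      simp only [List.nil_append, hσ', dev, induced, pureProfile,
        actor_append ν t t' hν r, hSin s r]
    rw [htrans s₁ σ₁ hσ₁, htrans s₂ σ₂ hσ₂, hsub]
  · intro h
    have h0 := h [] t (by simp [GameTree.nodeAt])
    have hiσ : induced σ [] = σ := rfl
    rwa [hiσ] at h0
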